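/- Let C ≥ 1 and let α_1, …, α_C, α_cs > 0 with α_0 = α_cs + Σ_{k=1}^C α_k. Then the Dirichlet expectation of the ambiguity, E(amb(q)) for q ~ Dir(α_1, …, α_C, α_cs), equals 1 − [α_0 (α_0 − α_cs + 1)]^{−1} Σ_{k=1}^C α_k (α_k + 1). Concretely, the integral over {x ∈ ℝ^C : x_i > 0, Σ_{i=1}^C x_i < 1}, with respect to C-dimensional Lebesgue measure and with q_k = x_k for k = 1,…,C and q_cs = 1 − Σ_{i=1}^C x_i, of amb(q)·D_α(q) equals this value, where D_α(q) = (Γ(α_0)/(Γ(α_cs)∏_{k=1}^C Γ(α_k))) · q_cs^{α_cs−1} ∏_{k=1}^C q_k^{α_k−1}. -/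

import Mathlib

open Finset MeasureTheory

/-- The ambiguity measure of a probability vector `(q₁, …, q_C, q_cs)`:
`1` if `q_cs = 1`, and `1 - (1/(1-q_cs)) ∑ q_k²` otherwise. -/
noncomputable def amb (C : ℕ) (q : Fin C → ℝ) (qcs : ℝ) : ℝ :=
  if qcs = 1 then 1 else 1 - (1 / (1 - qcs)) * ∑ k, (q k) ^ 2

/-- The Dirichlet density `D_α(q)` on the parameterized simplex
`{x ∈ ℝ^C : x_i > 0, ∑ x_i < 1}` (with `q_k = x_k` and `q_cs = 1 - ∑ x_i`),
for proper-category parameters `α` and can't-solve parameter `αcs`. -/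
noncomputable def dirichletDensity (C : ℕ) (α : Fin C → ℝ) (αcs : ℝ)
    (x : Fin C → ℝ) : ℝ :=
  (Real.Gamma (αcs + ∑ k, α k) / (Real.Gamma αcs * ∏ k, Real.Gamma (α k))) *
    (1 - ∑ i, x i) ^ (αcs - 1) * ∏ k, (x k) ^ (α k - 1)

open Real Set
open scoped ENNReal

lemma betaReal_eqOn (a b : ℝ) :
    Set.EqOn (fun x : ℝ => (x:ℂ) ^ ((a:ℂ)-1) * ((1:ℂ)-x) ^ ((b:ℂ)-1))
      (fun x : ℝ => ((x ^ (a-1) * (1-x) ^ (b-1) : ℝ) : ℂ)) (Set.uIcc 0 1) := by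
  intro x hx
  rw [Set.uIcc_of_le (by norm_num)] at hx
  obtain ⟨h0, h1⟩ := hx
  have e1 : ((x ^ (a-1) : ℝ) : ℂ) = (x:ℂ) ^ ((a:ℂ)-1) := by
    rw [Complex.ofReal_cpow h0]; push_cast; ring_nf
  have e2 : (((1-x) ^ (b-1) : ℝ) : ℂ) = ((1:ℂ)-x) ^ ((b:ℂ)-1) := by
    rw [Complex.ofReal_cpow (by linarith)]; push_cast; ring_nf
  simp only [Complex.ofReal_mul, e1, e2]

lemma betaReal_intervalIntegrable (a b : ℝ) (ha : 0 < a) (hb : 0 < b) :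
    IntervalIntegrable (fun x : ℝ => x ^ (a-1) * (1-x) ^ (b-1)) volume 0 1 := by
  have hc := Complex.betaIntegral_convergent (u := a) (v := b) (by simpa using ha) (by simpa using hb)
  rw [intervalIntegrable_iff_integrableOn_Ioc_of_le (by norm_num : (0:ℝ) ≤ 1)] at hc ⊢
  refine IntegrableOn.congr_fun (hc.re) (fun x hx => ?_) measurableSet_Ioc
  have := betaReal_eqOn a b (Ioc_subset_Icc_self.trans
    (by rw [Set.uIcc_of_le (by norm_num)]) hx)
  simp only at this
  rw [this]
  simp

lemma betaReal_value (a b : ℝ) (ha : 0 < a) (hb : 0 < b) :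
    ∫ x in (0:ℝ)..1, x ^ (a-1) * (1-x) ^ (b-1) = Gamma a * Gamma b / Gamma (a+b) := by
  have hbeta : Complex.betaIntegral a b =
      ((∫ x in (0:ℝ)..1, x ^ (a-1) * (1-x) ^ (b-1) : ℝ) : ℂ) := by
    rw [Complex.betaIntegral]
    rw [intervalIntegral.integral_congr (betaReal_eqOn a b)]
    exact intervalIntegral.integral_ofReal
  have h := Complex.Gamma_mul_Gamma_eq_betaIntegral (s := a) (t := b)
    (by simpa using ha) (by simpa using hb)
  rw [hbeta, ← Complex.ofReal_add, Complex.Gamma_ofReal, Complex.Gamma_ofReal,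
    Complex.Gamma_ofReal, ← Complex.ofReal_mul, ← Complex.ofReal_mul] at h
  have h' := Complex.ofReal_injective h
  have hG : Gamma (a+b) ≠ 0 := (Gamma_pos_of_pos (by linarith)).ne'
  field_simp [h']
  rw [h']; ring

lemma scaled_eqOn (a b c : ℝ) (hc : 0 < c) :
    Set.EqOn (fun x : ℝ => (c*x) ^ (a-1) * (c-c*x) ^ (b-1))
      (fun x : ℝ => (c ^ (a-1) * c ^ (b-1)) * (x ^ (a-1) * (1-x) ^ (b-1)))
      (Set.uIcc 0 1) := by
  intro x hx
  rw [Set.uIcc_of_le (by norm_num)] at hx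
  obtain ⟨h0, h1⟩ := hx
  have e1 : (c*x) ^ (a-1) = c ^ (a-1) * x ^ (a-1) := mul_rpow hc.le h0
  have e2 : (c-c*x) ^ (b-1) = c ^ (b-1) * (1-x) ^ (b-1) := by
    rw [show c - c*x = c*(1-x) by ring]; exact mul_rpow hc.le (by linarith)
  simp only [e1, e2]; ring

lemma betaScaled_integrableOn (a b c : ℝ) (ha : 0 < a) (hb : 0 < b) (hc : 0 < c) :
    IntegrableOn (fun t : ℝ => t ^ (a-1) * (c-t) ^ (b-1)) (Set.Ioc 0 c) := by
  have h1 : IntervalIntegrable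
      (fun x : ℝ => (c ^ (a-1) * c ^ (b-1)) * (x ^ (a-1) * (1-x) ^ (b-1))) volume 0 1 :=
    (betaReal_intervalIntegrable a b ha hb).const_mul _
  have h2 : IntervalIntegrable (fun x : ℝ => (c*x) ^ (a-1) * (c-c*x) ^ (b-1)) volume 0 1 :=
    h1.congr
      (fun x hx => (scaled_eqOn a b c hc (uIoc_subset_uIcc hx)).symm)
  have h3 := h2.comp_mul_left (c := c⁻¹)
  simp only [← mul_assoc, mul_inv_cancel₀ hc.ne', one_mul] at h3
  rw [show (0:ℝ)/c⁻¹ = 0 by simp, show (1:ℝ)/c⁻¹ = c by field_simp] at h3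
  rw [intervalIntegrable_iff_integrableOn_Ioc_of_le hc.le] at h3
  exact h3

lemma betaScaled_value (a b c : ℝ) (ha : 0 < a) (hb : 0 < b) (hc : 0 < c) :
    ∫ t in (0:ℝ)..c, t ^ (a-1) * (c-t) ^ (b-1)
      = c ^ (a+b-1) * (Gamma a * Gamma b / Gamma (a+b)) := by
  have key : (∫ t in (0:ℝ)..c, t ^ (a-1) * (c-t) ^ (b-1))
      = c • ∫ x in (0:ℝ)..1, (c*x) ^ (a-1) * (c-c*x) ^ (b-1) := by
    rw [intervalIntegral.smul_integral_comp_mul_left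
      (fun t : ℝ => t ^ (a-1) * (c-t) ^ (b-1)) c]
    norm_num
  rw [key, intervalIntegral.integral_congr (scaled_eqOn a b c hc),
    intervalIntegral.integral_const_mul, betaReal_value a b ha hb]
  rw [smul_eq_mul, show a+b-1 = 1+(a-1)+(b-1) by ring, rpow_add hc, rpow_add hc, rpow_one]
  ring

lemma betaLintegral (a b c : ℝ) (ha : 0 < a) (hb : 0 < b) (hc : 0 < c) :
    ∫⁻ t in Set.Ioo 0 c, ENNReal.ofReal (t ^ (a-1) * (c-t) ^ (b-1))
      = ENNReal.ofReal (c ^ (a+b-1) * (Gamma a * Gamma b / Gamma (a+b))) := by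
  rw [Measure.restrict_congr_set Ioo_ae_eq_Ioc]
  rw [← ofReal_integral_eq_lintegral_ofReal (betaScaled_integrableOn a b c ha hb hc)
      (ae_restrict_of_forall_mem measurableSet_Ioc (fun t ht => mul_nonneg (rpow_nonneg ht.1.le _) (rpow_nonneg (by linarith [ht.2]) _)))]
  rw [← intervalIntegral.integral_of_le hc.le, betaScaled_value a b c ha hb hc]

lemma measurable_rpow_const' (c : ℝ) : Measurable fun x : ℝ => x ^ c := by
  measurability

lemma measurableSet_simplex {n : ℕ} (c : ℝ) :
    MeasurableSet {x : Fin n → ℝ | (∀ i, 0 < x i) ∧ ∑ i, x i < c} := by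
  have h : {x : Fin n → ℝ | (∀ i, 0 < x i) ∧ ∑ i, x i < c}
      = (⋂ i, {x : Fin n → ℝ | 0 < x i}) ∩ {x : Fin n → ℝ | ∑ i, x i < c} := by
    ext x; simp
  rw [h]
  exact (MeasurableSet.iInter fun i =>
      measurableSet_lt measurable_const (measurable_pi_apply i)).inter
    (measurableSet_lt (Finset.measurable_sum _ fun i _ => measurable_pi_apply i)
      measurable_const)

lemma measurable_simplexIntegrand {n : ℕ} (α : Fin n → ℝ) (β c : ℝ) :
    Measurable fun x : Fin n → ℝ =>
      ENNReal.ofReal ((c - ∑ i, x i) ^ (β-1) * ∏ i, (x i) ^ (α i - 1)) := by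
  apply Measurable.ennreal_ofReal
  exact (((measurable_rpow_const' (β-1)).comp (measurable_const.sub
      (Finset.measurable_sum _ fun i _ => measurable_pi_apply i)))).mul
    (Finset.measurable_prod _ fun i _ =>
      (measurable_rpow_const' (α i - 1)).comp (measurable_pi_apply i))

lemma gamma_algebra (x p q r s P : ℝ) (hq : q ≠ 0) (hr : r ≠ 0) :
    x * (p * q / r) * (s * P / q) = x * (s * (p * P) / r) := by
  field_simp

lemma simplexLintegral : ∀ (n : ℕ) (α : Fin n → ℝ), (∀ i, 0 < α i) →
    ∀ (β c : ℝ), 0 < β → 0 < c →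
    ∫⁻ x in {x : Fin n → ℝ | (∀ i, 0 < x i) ∧ ∑ i, x i < c},
        ENNReal.ofReal ((c - ∑ i, x i) ^ (β-1) * ∏ i, (x i) ^ (α i - 1))
      = ENNReal.ofReal (c ^ ((∑ i, α i) + β - 1) *
          (Gamma β * (∏ i, Gamma (α i)) / Gamma ((∑ i, α i) + β))) := by
  intro n
  induction n with
  | zero =>
    intro α hα β c hβ hc
    have hset : {x : Fin 0 → ℝ | (∀ i, 0 < x i) ∧ ∑ i, x i < c} = Set.univ := by
      ext x; simp [hc]
    rw [hset, Measure.restrict_univ]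
    simp only [Finset.univ_eq_empty, Finset.sum_empty, Finset.prod_empty, mul_one, sub_zero,
      zero_add]
    rw [lintegral_const]
    have h1 : (volume : Measure (Fin 0 → ℝ)) Set.univ = 1 := by
      rw [volume_pi, Measure.pi_univ]; simp
    rw [h1, mul_one, div_self (Gamma_pos_of_pos hβ).ne', mul_one]
  | succ n ih =>
    intro α hα β c hβ hc
    set α' : Fin n → ℝ := fun j => α j.succ with hα'
    have hα'pos : ∀ j, 0 < α' j := fun j => hα _
    set A' : ℝ := ∑ j, α' j with hA'
    have hA'nonneg : 0 ≤ A' := Finset.sum_nonneg fun j _ => (hα'pos j).le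
    set K' : ℝ := Gamma β * (∏ j, Gamma (α' j)) / Gamma (A' + β) with hK'
    have hK'nonneg : 0 ≤ K' := by
      apply div_nonneg
      · exact mul_nonneg (Gamma_pos_of_pos hβ).le
          (Finset.prod_nonneg fun j _ => (Gamma_pos_of_pos (hα'pos j)).le)
      · exact (Gamma_pos_of_pos (by linarith)).le
    set f : (Fin (n+1) → ℝ) → ℝ≥0∞ := fun x =>
      ENNReal.ofReal ((c - ∑ i, x i) ^ (β-1) * ∏ i, (x i) ^ (α i - 1)) with hf
    set S : Set (Fin (n+1) → ℝ) := {x | (∀ i, 0 < x i) ∧ ∑ i, x i < c} with hS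
    have hmeas : Measurable (S.indicator f) :=
      (measurable_simplexIntegrand α β c).indicator (measurableSet_simplex c)
    rw [← lintegral_indicator (measurableSet_simplex c)]
    have hmp := (measurePreserving_piFinSuccAbove
      (fun _ : Fin (n+1) => (volume : Measure ℝ)) 0).symm
    rw [show (volume : Measure (Fin (n+1) → ℝ)) = Measure.pi fun _ => volume from volume_pi,
      ← hmp.lintegral_comp hmeas]
    have hae : AEMeasurable (fun a : ℝ × (Fin n → ℝ) =>
        S.indicator f ((MeasurableEquiv.piFinSuccAbove (fun _ : Fin (n+1) => ℝ) 0).symm a))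
        (Measure.prod volume (Measure.pi fun _ => volume)) :=
      (hmeas.comp (MeasurableEquiv.piFinSuccAbove
        (fun _ : Fin (n+1) => ℝ) 0).symm.measurable).aemeasurable
    rw [lintegral_prod _ hae]
    have key : ∀ t : ℝ, (∫⁻ y : Fin n → ℝ,
          S.indicator f ((MeasurableEquiv.piFinSuccAbove (fun _ => ℝ) 0).symm (t, y)))
        = (Set.Ioo (0:ℝ) c).indicator
            (fun t => ENNReal.ofReal (t ^ (α 0 - 1) * (c - t) ^ (A' + β - 1)) *
              ENNReal.ofReal K') t := by
      intro t
      have happ : ∀ y : Fin n → ℝ,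
          (MeasurableEquiv.piFinSuccAbove (fun _ : Fin (n+1) => ℝ) 0).symm (t, y)
            = Fin.cons t y := by
        intro y
        simp [MeasurableEquiv.piFinSuccAbove_symm_apply, Fin.insertNthEquiv,
          Fin.insertNth_zero]
      by_cases ht : t ∈ Set.Ioo (0:ℝ) c
      · have hmem : ∀ y : Fin n → ℝ,
            ((Fin.cons t y : Fin (n+1) → ℝ) ∈ S) ↔ ((∀ j, 0 < y j) ∧ ∑ j, y j < c - t) := by
          intro y
          have hsum : ∑ i, (Fin.cons t y : Fin (n+1) → ℝ) i = t + ∑ j, y j := by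
            rw [Fin.sum_univ_succ]; simp
          constructor
          · rintro ⟨h1, h2⟩
            rw [hsum] at h2
            exact ⟨fun j => by simpa using h1 j.succ, by linarith⟩
          · rintro ⟨h1, h2⟩
            refine ⟨?_, by rw [hsum]; linarith⟩
            intro i
            rcases Fin.eq_zero_or_eq_succ i with rfl | ⟨j, rfl⟩
            · simpa using ht.1
            · simpa using h1 j
        have hval : ∀ y : Fin n → ℝ, ((∀ j, 0 < y j) ∧ ∑ j, y j < c - t) →
            f (Fin.cons t y)
              = ENNReal.ofReal (t ^ (α 0 - 1)) *
                ENNReal.ofReal (((c-t) - ∑ j, y j) ^ (β-1) * ∏ j, (y j) ^ (α' j - 1)) := by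
          intro y hy
          rw [hf]
          simp only [Fin.sum_univ_succ, Fin.prod_univ_succ, Fin.cons_zero, Fin.cons_succ]
          rw [← ENNReal.ofReal_mul (rpow_nonneg ht.1.le _)]
          rw [show c - (t + ∑ j, y j) = (c - t) - ∑ j, y j by ring]
          congr 1
          ring
        calc (∫⁻ y : Fin n → ℝ,
              S.indicator f ((MeasurableEquiv.piFinSuccAbove (fun _ => ℝ) 0).symm (t, y)))
            = ∫⁻ y : Fin n → ℝ,
                Set.indicator {y : Fin n → ℝ | (∀ j, 0 < y j) ∧ ∑ j, y j < c - t}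
                  (fun y => ENNReal.ofReal (t ^ (α 0 - 1)) *
                    ENNReal.ofReal (((c-t) - ∑ j, y j) ^ (β-1) *
                      ∏ j, (y j) ^ (α' j - 1))) y := by
              congr 1; ext y
              rw [happ y]
              by_cases hy : y ∈ {y : Fin n → ℝ | (∀ j, 0 < y j) ∧ ∑ j, y j < c - t}
              · rw [Set.indicator_of_mem ((hmem y).2 hy), Set.indicator_of_mem hy, hval y hy]
              · rw [Set.indicator_of_notMem (fun h => hy ((hmem y).1 h)),
                  Set.indicator_of_notMem hy]
          _ = ENNReal.ofReal (t ^ (α 0 - 1)) *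
              ∫⁻ y in {y : Fin n → ℝ | (∀ j, 0 < y j) ∧ ∑ j, y j < c - t},
                ENNReal.ofReal (((c-t) - ∑ j, y j) ^ (β-1) * ∏ j, (y j) ^ (α' j - 1)) := by
              rw [← lintegral_indicator (measurableSet_simplex (c - t)),
                ← lintegral_const_mul' _ _ ENNReal.ofReal_ne_top]
              congr 1; ext y
              by_cases hy : y ∈ {y : Fin n → ℝ | (∀ j, 0 < y j) ∧ ∑ j, y j < c - t}
              · rw [Set.indicator_of_mem hy, Set.indicator_of_mem hy]
              · rw [Set.indicator_of_notMem hy, Set.indicator_of_notMem hy, mul_zero]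
          _ = (Set.Ioo (0:ℝ) c).indicator
              (fun t => ENNReal.ofReal (t ^ (α 0 - 1) * (c - t) ^ (A' + β - 1)) *
                ENNReal.ofReal K') t := by
              rw [ih α' hα'pos β (c - t) hβ (by linarith [ht.2])]
              rw [Set.indicator_of_mem ht, hK', hA',
                ← ENNReal.ofReal_mul (mul_nonneg (rpow_nonneg ht.1.le _)
                  (rpow_nonneg (by linarith [ht.2] : (0:ℝ) ≤ c - t) _)),
                ← ENNReal.ofReal_mul (rpow_nonneg ht.1.le _)]
              congr 1
              ring
      · rw [Set.indicator_of_notMem ht]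
        have hz : ∀ y : Fin n → ℝ,
            S.indicator f ((MeasurableEquiv.piFinSuccAbove (fun _ => ℝ) 0).symm (t, y)) = 0 := by
          intro y
          rw [happ y]
          apply Set.indicator_of_notMem
          rintro ⟨h1, h2⟩
          apply ht
          have hpos : 0 < t := by simpa using h1 0
          have hsum : 0 ≤ ∑ j, y j := Finset.sum_nonneg fun j _ =>
            (by simpa using h1 j.succ : (0:ℝ) < y j).le
          rw [Fin.sum_univ_succ] at h2
          simp only [Fin.cons_zero, Fin.cons_succ] at h2
          exact ⟨hpos, by linarith⟩
        simp only [hz, lintegral_zero]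
    beta_reduce
    rw [show (Measure.pi fun _ : Fin n => (volume : Measure ℝ)) = volume from volume_pi.symm]
    rw [lintegral_congr key]
    rw [lintegral_indicator measurableSet_Ioo, lintegral_mul_const' _ _ ENNReal.ofReal_ne_top,
      betaLintegral (α 0) (A' + β) c (hα 0) (by linarith) hc]
    have hab : (0:ℝ) < A' + β := by linarith
    have hab2 : (0:ℝ) < α 0 + (A' + β) := by linarith [hα 0]
    rw [← ENNReal.ofReal_mul (mul_nonneg (rpow_nonneg hc.le _)
      (div_nonneg (mul_nonneg (Gamma_pos_of_pos (hα 0)).le (Gamma_pos_of_pos hab).le)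
        (Gamma_pos_of_pos hab2).le))]
    congr 1
    have hsum : ∑ i, α i = α 0 + A' := by
      rw [Fin.sum_univ_succ]
    have hprod : ∏ i, Gamma (α i) = Gamma (α 0) * ∏ j, Gamma (α' j) := by
      rw [Fin.prod_univ_succ]
    have h1 : Gamma (A' + β) ≠ 0 := (Gamma_pos_of_pos hab).ne'
    have h2 : Gamma (α 0 + A' + β) ≠ 0 :=
      (Gamma_pos_of_pos (by linarith [hα 0])).ne'
    rw [hsum, hprod, hK', show α 0 + (A' + β) = α 0 + A' + β from by ring]
    exact gamma_algebra _ _ _ _ _ _ h1 h2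

set_option maxHeartbeats 1000000 in
lemma simplexLintegral_sq (n : ℕ) (α : Fin n → ℝ) (hα : ∀ i, 0 < α i)
    (β : ℝ) (hβ : 0 < β) (k : Fin n) :
    ∫⁻ x in {x : Fin n → ℝ | (∀ i, 0 < x i) ∧ ∑ i, x i < 1},
        ENNReal.ofReal ((x k) ^ 2 * (∑ i, x i)⁻¹ *
          ((1 - ∑ i, x i) ^ (β-1) * ∏ i, (x i) ^ (α i - 1)))
      = ENNReal.ofReal (α k * (α k + 1) * (∏ i, Gamma (α i)) * Gamma β /
          (((∑ i, α i) + 1) * Gamma ((∑ i, α i) + 1 + β))) := by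
  set A : ℝ := ∑ i, α i with hA
  have hApos : 0 < A := Finset.sum_pos (fun i _ => hα i) ⟨k, Finset.mem_univ k⟩
  set α'' : Fin n → ℝ := Function.update α k (α k + 2) with hα''
  have hα''pos : ∀ i, 0 < α'' i := by
    intro i
    rcases eq_or_ne i k with rfl | hik
    · rw [hα'', Function.update_self]; linarith [hα i]
    · rw [hα'', Function.update_of_ne hik]; exact hα i
  have hA'' : ∑ i, α'' i = A + 2 := by
    rw [hα'', Finset.sum_update_of_mem (Finset.mem_univ k), hA,
      ← Finset.add_sum_erase _ α (Finset.mem_univ k)]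
    rw [Finset.erase_eq]
    ring
  have hΓ'' : ∏ i, Gamma (α'' i) = α k * (α k + 1) * ∏ i, Gamma (α i) := by
    rw [hα'', ← Finset.mul_prod_erase _ (fun i => Gamma (Function.update α k (α k + 2) i))
      (Finset.mem_univ k), ← Finset.mul_prod_erase _ (fun i => Gamma (α i))
      (Finset.mem_univ k), Function.update_self]
    have h2 : Gamma (α k + 2) = (α k + 1) * (α k * Gamma (α k)) := by
      rw [show α k + 2 = (α k + 1) + 1 by ring, Gamma_add_one (by linarith [hα k]),
        Gamma_add_one (hα k).ne']
    rw [h2]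
    have : ∀ i ∈ Finset.univ.erase k,
        Gamma (Function.update α k (α k + 2) i) = Gamma (α i) := by
      intro i hi
      rw [Function.update_of_ne (Finset.ne_of_mem_erase hi)]
    rw [Finset.prod_congr rfl this]
    ring
  -- step 1: pointwise expansion into a series on the simplex
  set S : Set (Fin n → ℝ) := {x | (∀ i, 0 < x i) ∧ ∑ i, x i < 1} with hS
  set g : ℕ → (Fin n → ℝ) → ℝ≥0∞ := fun m x =>
    ENNReal.ofReal ((1 - ∑ i, x i) ^ ((β + m) - 1) * ∏ i, (x i) ^ (α'' i - 1)) with hg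
  have hmeasg : ∀ m, Measurable (g m) := by
    intro m
    apply Measurable.ennreal_ofReal
    exact (((measurable_rpow_const' ((β + m) - 1)).comp (measurable_const.sub
        (Finset.measurable_sum _ fun i _ => measurable_pi_apply i)))).mul
      (Finset.measurable_prod _ fun i _ =>
        (measurable_rpow_const' (α'' i - 1)).comp (measurable_pi_apply i))
  have hpt : ∀ x ∈ S, ENNReal.ofReal ((x k) ^ 2 * (∑ i, x i)⁻¹ *
      ((1 - ∑ i, x i) ^ (β-1) * ∏ i, (x i) ^ (α i - 1))) = ∑' m, g m x := by
    intro x hx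
    obtain ⟨hxpos, hxsum⟩ := hx
    set s : ℝ := ∑ i, x i with hs
    have hspos : 0 < s := Finset.sum_pos (fun i _ => hxpos i) ⟨k, Finset.mem_univ k⟩
    have h1s : 0 < 1 - s := by linarith
    have h1s' : 1 - s < 1 := by linarith
    have hgeo : ∑' m : ℕ, (1-s) ^ m = s⁻¹ := by
      rw [tsum_geometric_of_lt_one h1s.le h1s']
      norm_num
    have hsummable : Summable (fun m : ℕ => (x k) ^ 2 * (1-s) ^ m *
        ((1 - s) ^ (β-1) * ∏ i, (x i) ^ (α i - 1))) := by
      exact ((summable_geometric_of_lt_one h1s.le h1s').mul_left _).mul_right _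
    have hterm : ∀ m : ℕ, (x k) ^ 2 * (1-s) ^ m *
        ((1 - s) ^ (β-1) * ∏ i, (x i) ^ (α i - 1))
        = (1 - s) ^ ((β + m) - 1) * ∏ i, (x i) ^ (α'' i - 1) := by
      intro m
      have hprod : ∏ i, (x i) ^ (α'' i - 1)
          = (x k) ^ (α k + 2 - 1) * ∏ i ∈ Finset.univ.erase k, (x i) ^ (α i - 1) := by
        rw [hα'', ← Finset.mul_prod_erase _
          (fun i => (x i) ^ (Function.update α k (α k + 2) i - 1)) (Finset.mem_univ k),
          Function.update_self]
        congr 1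
        apply Finset.prod_congr rfl
        intro i hi
        rw [Function.update_of_ne (Finset.ne_of_mem_erase hi)]
      have hprod0 : ∏ i, (x i) ^ (α i - 1)
          = (x k) ^ (α k - 1) * ∏ i ∈ Finset.univ.erase k, (x i) ^ (α i - 1) :=
        (Finset.mul_prod_erase _ (fun i => (x i) ^ (α i - 1)) (Finset.mem_univ k)).symm
      have hxk : (x k : ℝ) ^ 2 * (x k) ^ (α k - 1) = (x k) ^ (α k + 2 - 1) := by
        rw [show ((x k : ℝ) ^ 2) = (x k) ^ (2:ℝ) from (rpow_natCast _ 2).symm,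
          ← rpow_add (hxpos k)]
        ring_nf
      have hpow : (1-s) ^ m * (1 - s) ^ (β-1) = (1 - s) ^ ((β + m) - 1) := by
        rw [show ((1-s) ^ m) = (1-s) ^ (m:ℝ) from (rpow_natCast _ m).symm,
          ← rpow_add h1s]
        ring_nf
      calc (x k) ^ 2 * (1-s) ^ m * ((1 - s) ^ (β-1) * ∏ i, (x i) ^ (α i - 1))
          = ((1-s) ^ m * (1 - s) ^ (β-1)) * ((x k) ^ 2 * ∏ i, (x i) ^ (α i - 1)) := by ring
        _ = (1 - s) ^ ((β + m) - 1) * ∏ i, (x i) ^ (α'' i - 1) := by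
            rw [hpow, hprod0, hprod, ← hxk]
            ring
    have hexp : (x k) ^ 2 * s⁻¹ * ((1 - s) ^ (β-1) * ∏ i, (x i) ^ (α i - 1))
        = ∑' m : ℕ, ((x k) ^ 2 * (1-s) ^ m * ((1 - s) ^ (β-1) * ∏ i, (x i) ^ (α i - 1))) := by
      rw [← hgeo, ← tsum_mul_left, ← tsum_mul_right]
    rw [hexp, ENNReal.ofReal_tsum_of_nonneg ?_ hsummable]
    · exact tsum_congr fun m => by rw [hterm m]
    · intro m
      have h0 : (0:ℝ) ≤ x k := (hxpos k).le
      have hp : (0:ℝ) ≤ ∏ i, (x i) ^ (α i - 1) :=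
        Finset.prod_nonneg fun i _ => rpow_nonneg (hxpos i).le _
      exact mul_nonneg (mul_nonneg (pow_nonneg h0 2) (pow_nonneg h1s.le m))
        (mul_nonneg (rpow_nonneg h1s.le _) hp)
  -- step 2: swap sum and integral
  rw [setLIntegral_congr_fun (measurableSet_simplex 1) hpt,
    lintegral_tsum (fun m => (hmeasg m).aemeasurable)]
  -- step 3: evaluate each term
  have hterm : ∀ m : ℕ, ∫⁻ x in S, g m x
      = ENNReal.ofReal (α k * (α k + 1) * (∏ i, Gamma (α i)) / Gamma (A + 2)) *
        ∫⁻ t in Set.Ioo (0:ℝ) 1, ENNReal.ofReal (t ^ ((A + 2) - 1) * (1-t) ^ ((β + m) - 1)) := by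
    intro m
    have hβm : (0:ℝ) < β + m := by positivity
    rw [hg]
    simp only
    rw [hS]
    rw [simplexLintegral n α'' hα''pos (β + m) 1 hβm one_pos]
    rw [betaLintegral (A + 2) (β + m) 1 (by linarith) hβm one_pos]
    rw [hA'', hΓ'', one_rpow, one_mul, one_mul]
    have hCnn : (0:ℝ) ≤ α k * (α k + 1) * (∏ i, Gamma (α i)) / Gamma (A + 2) :=
      div_nonneg (mul_nonneg (mul_nonneg (hα k).le (by linarith [hα k]))
        (Finset.prod_nonneg fun i _ => (Gamma_pos_of_pos (hα i)).le))
        (Gamma_pos_of_pos (by linarith)).le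
    rw [← ENNReal.ofReal_mul hCnn]
    congr 1
    have hΓA2 : Gamma (A + 2) ≠ 0 := (Gamma_pos_of_pos (by linarith)).ne'
    have hΓs : Gamma (A + 2 + (β + m)) ≠ 0 := (Gamma_pos_of_pos (by linarith)).ne'
    field_simp
  rw [tsum_congr hterm, ENNReal.tsum_mul_left, ← lintegral_tsum ?_]
  swap
  · intro m
    exact (Measurable.ennreal_ofReal (((measurable_rpow_const' _).mul
      ((measurable_rpow_const' _).comp (measurable_const.sub measurable_id))))).aemeasurable
  -- step 4: sum the series inside the 1-d integral
  have hsum1 : ∀ t ∈ Set.Ioo (0:ℝ) 1,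
      (∑' m : ℕ, ENNReal.ofReal (t ^ ((A + 2) - 1) * (1-t) ^ ((β + m) - 1)))
        = ENNReal.ofReal (t ^ ((A + 1) - 1) * (1-t) ^ (β-1)) := by
    intro t ht
    obtain ⟨ht0, ht1⟩ := ht
    have h1t : 0 < 1 - t := by linarith
    have hterm2 : ∀ m : ℕ, t ^ ((A + 2) - 1) * (1-t) ^ ((β + m) - 1)
        = (t ^ ((A + 1) - 1) * (1-t) ^ (β-1) * t) * (1-t) ^ m := by
      intro m
      rw [show ((1-t) ^ (m:ℕ)) = (1-t) ^ (m:ℝ) from (rpow_natCast _ m).symm,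
        show ((β + m) - 1 : ℝ) = (β - 1) + m by ring, rpow_add h1t,
        show ((A + 2) - 1 : ℝ) = ((A+1) - 1) + 1 by ring, rpow_add ht0, rpow_one]
      ring
    have hgeosum : ∑' m : ℕ, (t ^ ((A + 1) - 1) * (1-t) ^ (β-1) * t) * (1-t) ^ m
        = t ^ ((A + 1) - 1) * (1-t) ^ (β-1) := by
      rw [tsum_mul_left, tsum_geometric_of_lt_one h1t.le (by linarith)]
      rw [show (1 - (1-t)) = t by ring]
      field_simp
    have hsummable2 : Summable (fun m : ℕ =>
        t ^ ((A + 2) - 1) * (1-t) ^ ((β + m) - 1)) :=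
      ((summable_geometric_of_lt_one h1t.le (by linarith)).mul_left
        (t ^ ((A + 1) - 1) * (1-t) ^ (β-1) * t)).congr (fun m => (hterm2 m).symm)
    have hnn : ∀ m : ℕ, (0:ℝ) ≤ t ^ ((A + 2) - 1) * (1-t) ^ ((β + m) - 1) :=
      fun m => mul_nonneg (rpow_nonneg ht0.le _) (rpow_nonneg h1t.le _)
    calc (∑' m : ℕ, ENNReal.ofReal (t ^ ((A + 2) - 1) * (1-t) ^ ((β + m) - 1)))
        = ENNReal.ofReal (∑' m : ℕ, t ^ ((A + 2) - 1) * (1-t) ^ ((β + m) - 1)) :=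
          (ENNReal.ofReal_tsum_of_nonneg hnn hsummable2).symm
      _ = ENNReal.ofReal (t ^ ((A + 1) - 1) * (1-t) ^ (β-1)) := by
          rw [tsum_congr (fun m => hterm2 m), hgeosum]
  rw [setLIntegral_congr_fun measurableSet_Ioo hsum1,
    betaLintegral (A + 1) β 1 (by linarith) hβ one_pos, one_rpow, one_mul]
  have hCnn : (0:ℝ) ≤ α k * (α k + 1) * (∏ i, Gamma (α i)) / Gamma (A + 2) :=
    div_nonneg (mul_nonneg (mul_nonneg (hα k).le (by linarith [hα k]))
      (Finset.prod_nonneg fun i _ => (Gamma_pos_of_pos (hα i)).le))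
      (Gamma_pos_of_pos (by linarith)).le
  rw [← ENNReal.ofReal_mul hCnn]
  congr 1
  have hΓA2 : Gamma (A + 2) = (A + 1) * Gamma (A + 1) := by
    rw [show (A + 2 : ℝ) = (A + 1) + 1 by ring, Gamma_add_one (by linarith)]
  have h1 : Gamma (A + 2) ≠ 0 := (Gamma_pos_of_pos (by linarith)).ne'
  have h2 : Gamma (A + 1 + β) ≠ 0 := (Gamma_pos_of_pos (by linarith)).ne'
  have h3 : Gamma (A + 1) ≠ 0 := (Gamma_pos_of_pos (by linarith)).ne'
  have h4 : (A + 1 : ℝ) ≠ 0 := by linarith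
  rw [hΓA2]
  field_simp

set_option maxHeartbeats 1000000 in
/-- The Dirichlet expectation of the ambiguity equals
`1 - [α₀(α₀ - α_cs + 1)]⁻¹ ∑ α_k(α_k + 1)`. -/
theorem dirichlet_expected_amb
    (C : ℕ) (hC : 1 ≤ C) (α : Fin C → ℝ) (αcs : ℝ)
    (hα : ∀ k, 0 < α k) (hαcs : 0 < αcs)
    (α₀ : ℝ) (hα₀ : α₀ = αcs + ∑ k, α k) :
    ∫ x in {x : Fin C → ℝ | (∀ i, 0 < x i) ∧ ∑ i, x i < 1},
        amb C x (1 - ∑ i, x i) * dirichletDensity C α αcs x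
      = 1 - (α₀ * (α₀ - αcs + 1))⁻¹ * ∑ k, α k * (α k + 1) := by
  have hk0 : (Finset.univ : Finset (Fin C)).Nonempty := ⟨⟨0, hC⟩, Finset.mem_univ _⟩
  set A : ℝ := ∑ i, α i with hA
  have hApos : 0 < A := Finset.sum_pos (fun i _ => hα i) hk0
  set S : Set (Fin C → ℝ) := {x | (∀ i, 0 < x i) ∧ ∑ i, x i < 1} with hS
  have hSmeas : MeasurableSet S := measurableSet_simplex 1
  set Cst : ℝ := Gamma (αcs + A) / (Gamma αcs * ∏ k, Gamma (α k)) with hCst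
  have hprodΓpos : 0 < ∏ k, Gamma (α k) :=
    Finset.prod_pos fun k _ => Gamma_pos_of_pos (hα k)
  have hCstpos : 0 < Cst := div_pos (Gamma_pos_of_pos (by linarith))
    (mul_pos (Gamma_pos_of_pos hαcs) hprodΓpos)
  set base : (Fin C → ℝ) → ℝ := fun x =>
    (1 - ∑ i, x i) ^ (αcs-1) * ∏ i, (x i) ^ (α i - 1) with hbase
  set sq : Fin C → (Fin C → ℝ) → ℝ := fun k x =>
    (x k) ^ 2 * (∑ i, x i)⁻¹ * base x with hsq
  -- measurability
  have hmb : Measurable base := by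
    exact (((measurable_rpow_const' (αcs-1)).comp (measurable_const.sub
        (Finset.measurable_sum _ fun i _ => measurable_pi_apply i)))).mul
      (Finset.measurable_prod _ fun i _ =>
        (measurable_rpow_const' (α i - 1)).comp (measurable_pi_apply i))
  have hmsq : ∀ k, Measurable (sq k) := by
    intro k
    exact (((measurable_pi_apply k).pow_const 2).mul
      ((Finset.measurable_sum _ fun i _ => measurable_pi_apply i).inv)).mul hmb
  -- nonnegativity on S
  have hbase_nn : ∀ x ∈ S, 0 ≤ base x := by
    intro x hx
    exact mul_nonneg (rpow_nonneg (by linarith [hx.2]) _)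
      (Finset.prod_nonneg fun i _ => rpow_nonneg (hx.1 i).le _)
  have hsq_nn : ∀ k, ∀ x ∈ S, 0 ≤ sq k x := by
    intro k x hx
    have hsum : 0 < ∑ i, x i := Finset.sum_pos (fun i _ => hx.1 i) hk0
    exact mul_nonneg (mul_nonneg (pow_nonneg (hx.1 k).le 2) (by positivity))
      (hbase_nn x hx)
  -- lintegral values
  have hL0 : ∫⁻ x in S, ENNReal.ofReal (Cst * base x)
      = ENNReal.ofReal (Cst * (Gamma αcs * (∏ i, Gamma (α i)) / Gamma (A + αcs))) := by
    simp_rw [ENNReal.ofReal_mul hCstpos.le]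
    rw [lintegral_const_mul' _ _ ENNReal.ofReal_ne_top, hS, hbase]
    rw [simplexLintegral C α hα αcs 1 hαcs one_pos, one_rpow, one_mul,
      ← ENNReal.ofReal_mul hCstpos.le]
  have hLk : ∀ k, ∫⁻ x in S, ENNReal.ofReal (Cst * sq k x)
      = ENNReal.ofReal (Cst * (α k * (α k + 1) * (∏ i, Gamma (α i)) * Gamma αcs /
          ((A + 1) * Gamma (A + 1 + αcs)))) := by
    intro k
    simp_rw [ENNReal.ofReal_mul hCstpos.le]
    rw [lintegral_const_mul' _ _ ENNReal.ofReal_ne_top, hS, hsq]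
    simp only [hbase]
    rw [simplexLintegral_sq C α hα αcs hαcs k, ← ENNReal.ofReal_mul hCstpos.le]
  -- integrability
  have hint : ∀ (f : (Fin C → ℝ) → ℝ), Measurable f → (∀ x ∈ S, 0 ≤ f x) →
      (∫⁻ x in S, ENNReal.ofReal (f x)) < ⊤ → IntegrableOn f S volume := by
    intro f hfm hfnn hfin
    refine ⟨hfm.aestronglyMeasurable, ?_⟩
    rw [hasFiniteIntegral_iff_ofReal (ae_restrict_of_forall_mem hSmeas hfnn)]
    exact hfin
  have hint0 : IntegrableOn (fun x => Cst * base x) S volume := by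
    refine hint _ (measurable_const.mul hmb)
      (fun x hx => mul_nonneg hCstpos.le (hbase_nn x hx)) ?_
    rw [hL0]; exact ENNReal.ofReal_lt_top
  have hintk : ∀ k, IntegrableOn (fun x => Cst * sq k x) S volume := by
    intro k
    refine hint _ (measurable_const.mul (hmsq k))
      (fun x hx => mul_nonneg hCstpos.le (hsq_nn k x hx)) ?_
    rw [hLk k]; exact ENNReal.ofReal_lt_top
  -- rewrite the integrand on S
  have hcongr : Set.EqOn (fun x => amb C x (1 - ∑ i, x i) * dirichletDensity C α αcs x)
      (fun x => Cst * base x - ∑ k, Cst * sq k x) S := by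
    intro x hx
    have hsum : 0 < ∑ i, x i := Finset.sum_pos (fun i _ => hx.1 i) hk0
    have hne : ¬ (1 - ∑ i, x i = 1) := by intro h; linarith
    have hdd : dirichletDensity C α αcs x = Cst * base x := by
      rw [dirichletDensity, hCst, hbase, hA, mul_assoc]
    simp only [amb, if_neg hne, hdd]
    have h1 : 1 - (1 - ∑ i, x i) = ∑ i, x i := by ring
    rw [h1]
    have h2 : (1 / (∑ i, x i)) = (∑ i, x i)⁻¹ := one_div _
    rw [h2, sub_mul, one_mul]
    congr 1
    rw [hsq]
    simp only
    rw [Finset.mul_sum, Finset.sum_mul]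
    apply Finset.sum_congr rfl
    intro k _
    ring
  rw [setIntegral_congr_fun hSmeas hcongr]
  rw [integral_sub hint0 (integrable_finset_sum _ fun k _ => hintk k),
    integral_finset_sum _ fun k _ => hintk k]
  -- evaluate the integrals
  have hv0 : ∫ x in S, Cst * base x = Cst * (Gamma αcs * (∏ i, Gamma (α i)) / Gamma (A + αcs)) := by
    rw [integral_eq_lintegral_of_nonneg_ae
      (ae_restrict_of_forall_mem hSmeas fun x hx => mul_nonneg hCstpos.le (hbase_nn x hx))
      (measurable_const.mul hmb).aestronglyMeasurable, hL0, ENNReal.toReal_ofReal]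
    positivity
  have hvk : ∀ k, ∫ x in S, Cst * sq k x
      = Cst * (α k * (α k + 1) * (∏ i, Gamma (α i)) * Gamma αcs /
          ((A + 1) * Gamma (A + 1 + αcs))) := by
    intro k
    rw [integral_eq_lintegral_of_nonneg_ae
      (ae_restrict_of_forall_mem hSmeas fun x hx => mul_nonneg hCstpos.le (hsq_nn k x hx))
      (measurable_const.mul (hmsq k)).aestronglyMeasurable, hLk k, ENNReal.toReal_ofReal]
    have := hα k
    positivity
  rw [hv0]
  rw [Finset.sum_congr rfl (fun k _ => hvk k)]
  -- final arithmetic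
  have hA0 : α₀ = αcs + A := by rw [hα₀, hA]
  have hΓα₀ : Gamma (A + αcs) = Gamma α₀ := by rw [hA0, add_comm]
  have hΓα₀1 : Gamma (A + 1 + αcs) = α₀ * Gamma α₀ := by
    rw [show (A + 1 + αcs : ℝ) = (αcs + A) + 1 by ring, Gamma_add_one (by positivity), hA0]
  have hT0 : Cst * (Gamma αcs * (∏ i, Gamma (α i)) / Gamma (A + αcs)) = 1 := by
    rw [hCst, hΓα₀, hA0]
    field_simp
  have hTk : ∀ k, Cst * (α k * (α k + 1) * (∏ i, Gamma (α i)) * Gamma αcs /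
      ((A + 1) * Gamma (A + 1 + αcs))) = α k * (α k + 1) / (α₀ * (A + 1)) := by
    intro k
    rw [hCst, hΓα₀1, hA0]
    have hΓ0 : Gamma (αcs + A) ≠ 0 := (Gamma_pos_of_pos (by linarith)).ne'
    have hΓcs : Gamma αcs ≠ 0 := (Gamma_pos_of_pos hαcs).ne'
    have hα₀pos : 0 < α₀ := by rw [hA0]; linarith
    field_simp
  rw [Finset.sum_congr rfl (fun k _ => hTk k), hT0]
  have hA1 : α₀ - αcs + 1 = A + 1 := by rw [hA0]; ring
  rw [hA1]
  have hα₀pos : 0 < α₀ := by rw [hA0]; linarith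
  congr 1
  rw [Finset.mul_sum]
  apply Finset.sum_congr rfl
  intro k _
  rw [div_eq_inv_mul]
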